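/- Let B be a positive definite symmetric real g×g matrix, let e_i ∈ ℝ^g be the i-th standard basis vector, and let t ∈ ℝ. Then the tropical theta function satisfies Θ((1/2)B e_i + t e_i; B) − Θ((1/2)B e_i − t e_i; B) = −t. In particular, the piecewise linear function f(t) := Θ((1/2)B e_i + t e_i; B) has a break of odd weight at t = 0 (t = 0 is a zero of f of degree 1 when f has integer slopes). -/

import Mathlib

open scoped BigOperators

/-- The tropical theta function `Θ(z; B) = min_{m ∈ ℤ^g} [(1/2)⟨m, B m⟩ + ⟨m, z⟩]`,
defined as an infimum. -/
noncomputable def tropTheta (g : ℕ) (B : Matrix (Fin g) (Fin g) ℝ) (z : Fin g → ℝ) : ℝ :=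
  sInf {x : ℝ | ∃ m : Fin g → ℤ,
    x = (1/2) * ∑ i, (m i : ℝ) * (∑ j, B i j * (m j : ℝ)) + ∑ i, (m i : ℝ) * z i}

open Matrix in
/-- at the half-period `(1/2) B e_i` the tropical theta function satisfies
`Θ((1/2)B e_i + t e_i; B) - Θ((1/2)B e_i - t e_i; B) = -t` for all real `t`
(so `t = 0` is a zero of degree 1 of `t ↦ Θ((1/2)B e_i + t e_i; B)`). -/
theorem stmt7 (g : ℕ) (B : Matrix (Fin g) (Fin g) ℝ) (hB : B.PosDef)
    (i : Fin g) (t : ℝ)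
    (e : Fin g → ℝ) (he : e = Pi.single i 1) :
    tropTheta g B ((1/2 : ℝ) • B.mulVec e + t • e)
      - tropTheta g B ((1/2 : ℝ) • B.mulVec e - t • e)
      = -t := by
  -- rewrite the defining expression via dot products
  have hcast : ∀ (z : Fin g → ℝ) (m : Fin g → ℤ),
      ((1/2:ℝ) * ∑ a, (m a : ℝ) * (∑ b, B a b * (m b : ℝ)) + ∑ a, (m a : ℝ) * z a)
        = (1/2:ℝ) * ((fun a => (m a:ℝ)) ⬝ᵥ B.mulVec (fun a => (m a:ℝ)))
            + (fun a => (m a:ℝ)) ⬝ᵥ z := by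
    intro z m; simp [Matrix.mulVec, dotProduct]
  -- symmetry of the bilinear form
  have hBsym : ∀ a b, B a b = B b a := fun a b => by
    have := hB.1.apply a b; simpa using this.symm
  have hsym : ∀ v w : Fin g → ℝ, v ⬝ᵥ B.mulVec w = w ⬝ᵥ B.mulVec v := by
    intro v w
    simp only [dotProduct, Matrix.mulVec, Finset.mul_sum]
    rw [Finset.sum_comm]
    exact Finset.sum_congr rfl fun a _ => Finset.sum_congr rfl fun b _ => by
      rw [hBsym b a]; ring
  -- nonnegativity of the quadratic form
  have hpos : ∀ x : Fin g → ℝ, 0 ≤ x ⬝ᵥ B.mulVec x := fun x => by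
    simpa using hB.posSemidef.dotProduct_mulVec_nonneg x
  -- the set defining tropTheta
  set S : (Fin g → ℝ) → Set ℝ := fun z => {x : ℝ | ∃ m : Fin g → ℤ,
    x = (1/2:ℝ) * ∑ a, (m a : ℝ) * (∑ b, B a b * (m b : ℝ)) + ∑ a, (m a : ℝ) * z a}
    with hS
  have htheta : ∀ z, tropTheta g B z = sInf (S z) := fun z => rfl
  -- each set is nonempty
  have hne : ∀ z, (S z).Nonempty := by
    intro z
    exact ⟨_, ⟨(0 : Fin g → ℤ), rfl⟩⟩
  -- each set is bounded below, using positive definiteness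
  have hbdd : ∀ z, BddBelow (S z) := by
    intro z
    set w : Fin g → ℝ := B⁻¹.mulVec z with hw
    have hBw : B.mulVec w = z := by
      rw [hw, Matrix.mulVec_mulVec,
        Matrix.mul_nonsing_inv _ (isUnit_iff_ne_zero.2 hB.det_pos.ne'), Matrix.one_mulVec]
    refine ⟨-(1/2:ℝ) * (w ⬝ᵥ B.mulVec w), ?_⟩
    rintro x ⟨m, rfl⟩
    rw [hcast]
    set u : Fin g → ℝ := fun a => (m a : ℝ) with hu
    have hexp : (u + w) ⬝ᵥ B.mulVec (u + w)
        = u ⬝ᵥ B.mulVec u + 2 * (u ⬝ᵥ z) + w ⬝ᵥ B.mulVec w := by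
      have h1 : w ⬝ᵥ B.mulVec u = u ⬝ᵥ B.mulVec w := hsym w u
      simp only [Matrix.mulVec_add, add_dotProduct, dotProduct_add, h1, hBw]
      ring
    have h0 := hpos (u + w)
    rw [hexp] at h0
    linarith
  -- the key involution identity
  have key : ∀ (s : ℝ) (m : Fin g → ℤ),
      (1/2:ℝ) * ∑ a, (((-m - Pi.single i 1 : Fin g → ℤ) a : ℝ))
          * (∑ b, B a b * (((-m - Pi.single i 1 : Fin g → ℤ) b : ℝ)))
        + ∑ a, (((-m - Pi.single i 1 : Fin g → ℤ) a : ℝ))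
            * ((1/2 : ℝ) • B.mulVec e - s • e) a
      = ((1/2:ℝ) * ∑ a, (m a : ℝ) * (∑ b, B a b * (m b : ℝ))
          + ∑ a, (m a : ℝ) * ((1/2 : ℝ) • B.mulVec e + s • e) a) + s := by
    intro s m
    rw [hcast, hcast]
    set u : Fin g → ℝ := fun a => (m a : ℝ) with hu
    have hcast2 : (fun a => (((-m - Pi.single i 1 : Fin g → ℤ) a : ℝ))) = -u - e := by
      funext a
      simp [he, Pi.single_apply, hu]
    rw [hcast2]
    have h1 : e ⬝ᵥ B.mulVec u = u ⬝ᵥ B.mulVec e := hsym e u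
    have h2 : e ⬝ᵥ B.mulVec e = B i i := by
      rw [he]; simp [Matrix.mulVec_single]
    have h3 : e ⬝ᵥ e = 1 := by rw [he]; simp
    have h4 : u ⬝ᵥ e = u i := by rw [he]; simp
    simp only [Matrix.mulVec_sub, Matrix.mulVec_neg, sub_dotProduct,
      neg_dotProduct, dotProduct_sub, dotProduct_add, dotProduct_neg,
      dotProduct_smul, smul_eq_mul, h1, h2, h3, h4]
    ring
  -- the two shifted sets
  have hmem1 : ∀ x ∈ S ((1/2 : ℝ) • B.mulVec e + t • e),
      x + t ∈ S ((1/2 : ℝ) • B.mulVec e - t • e) := by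
    rintro x ⟨m, rfl⟩
    exact ⟨-m - Pi.single i 1, (key t m).symm⟩
  have hmem2 : ∀ x ∈ S ((1/2 : ℝ) • B.mulVec e - t • e),
      x - t ∈ S ((1/2 : ℝ) • B.mulVec e + t • e) := by
    rintro x ⟨m, rfl⟩
    refine ⟨-m - Pi.single i 1, ?_⟩
    have h := key (-t) m
    have e1 : (1/2 : ℝ) • B.mulVec e - (-t) • e = (1/2 : ℝ) • B.mulVec e + t • e := by
      rw [neg_smul, sub_neg_eq_add]
    have e2 : (1/2 : ℝ) • B.mulVec e + (-t) • e = (1/2 : ℝ) • B.mulVec e - t • e := by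
      rw [neg_smul, ← sub_eq_add_neg]
    rw [e1, e2] at h
    linarith [h]
  -- compare the infima
  have hinf : sInf (S ((1/2 : ℝ) • B.mulVec e - t • e))
      = sInf (S ((1/2 : ℝ) • B.mulVec e + t • e)) + t := by
    apply le_antisymm
    · rw [← sub_le_iff_le_add]
      apply le_csInf (hne _)
      intro x hx
      have := csInf_le (hbdd _) (hmem1 x hx)
      linarith
    · apply le_csInf (hne _)
      intro x hx
      have := csInf_le (hbdd _) (hmem2 x hx)
      linarith
  rw [htheta, htheta, hinf]
  ring
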